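/- If M is an R-module such that R_f ⊗_R M is a finitely generated R_f-module and R̂ ⊗_R M is a finitely generated R̂-module, then M is a finitely generated R-module. -/

import Mathlib

open TensorProduct

set_option maxHeartbeats 1000000
set_option synthInstance.maxHeartbeats 400000

noncomputable section

variable (R : Type*) [CommRing R] (f : R)

/-- The `(f)`-adic completion `R̂` of `R`. -/
abbrev Rhat : Type _ := AdicCompletion (Ideal.span {f}) R

/-- The localization `R_f = R[f⁻¹]`. -/
abbrev Rf : Type _ := Localization.Away f

section Aux

variable {R' : Type*} [CommRing R'] (A : Type*) [CommRing A] [Algebra R' A]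
variable {M' : Type*} [AddCommGroup M'] [Module R' M']

/-- If `A ⊗ M` is a finite `A`-module, there is a finite subset of `M` whose image
generates it. -/
lemma aux_span (h : Module.Finite A (A ⊗[R'] M')) :
    ∃ s : Finset M',
      (⊤ : Submodule A (A ⊗[R'] M')) ≤ ⨆ m ∈ s, Submodule.span A {(1 : A) ⊗ₜ[R'] m} := by
  have hc := (Submodule.fg_iff_compact _).mp (Module.finite_def.mp h)
  have htop : ∀ x : A ⊗[R'] M', x ∈ ⨆ m : M', Submodule.span A {(1 : A) ⊗ₜ[R'] m} := by
    intro x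
    induction x using TensorProduct.induction_on with
    | zero => exact Submodule.zero_mem _
    | tmul a m =>
        have : a ⊗ₜ[R'] m = a • ((1 : A) ⊗ₜ[R'] m) := by
          rw [smul_tmul', smul_eq_mul, mul_one]
        rw [this]
        exact Submodule.smul_mem _ a
          (Submodule.mem_iSup_of_mem m (Submodule.mem_span_singleton_self _))
    | add x y hx hy => exact Submodule.add_mem _ hx hy
  exact CompleteLattice.IsCompactElement.exists_finset_of_le_iSup (Submodule A (A ⊗[R'] M')) hc (fun m => Submodule.span A {(1 : A) ⊗ₜ[R'] m})
    (fun x _ => htop x)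

/-- If the image of a finite subset of `N` generates `A ⊗ M`, then `A ⊗ (M ⧸ N) = 0`. -/
lemma aux_zero (N : Submodule R' M') (s : Finset M') (hsN : ∀ m ∈ s, m ∈ N)
    (hs : (⊤ : Submodule A (A ⊗[R'] M')) ≤ ⨆ m ∈ s, Submodule.span A {(1 : A) ⊗ₜ[R'] m}) :
    ∀ x : A ⊗[R'] (M' ⧸ N), x = 0 := by
  set g := LinearMap.baseChange A N.mkQ with hg
  have hsurj : Function.Surjective g := by
    intro x
    induction x using TensorProduct.induction_on with
    | zero => exact ⟨0, map_zero g⟩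
    | tmul a q =>
        obtain ⟨m, rfl⟩ := N.mkQ_surjective q
        exact ⟨a ⊗ₜ m, rfl⟩
    | add x y hx hy =>
        obtain ⟨u, rfl⟩ := hx
        obtain ⟨v, rfl⟩ := hy
        exact ⟨u + v, map_add g u v⟩
  have hker : ∀ y : A ⊗[R'] M', g y = 0 := by
    intro y
    have hy : y ∈ LinearMap.ker g := by
      refine (le_trans hs (iSup_le fun m => iSup_le fun hm => ?_)) Submodule.mem_top
      rw [Submodule.span_singleton_le_iff_mem]
      have hm0 : N.mkQ m = 0 := (Submodule.Quotient.mk_eq_zero N).mpr (hsN m hm)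
      show g ((1 : A) ⊗ₜ[R'] m) = 0
      rw [hg, LinearMap.baseChange_tmul, hm0, tmul_zero]
    exact hy
  intro x
  obtain ⟨y, rfl⟩ := hsurj x
  exact hker y

end Aux

/-- if `R_f ⊗_R M` is a finitely generated `R_f`-module and `R̂ ⊗_R M` is a
finitely generated `R̂`-module, then `M` is a finitely generated `R`-module. -/
theorem stmt9 [IsNoetherianRing R] (hf : f ∈ nonZeroDivisors R)
    (M : Type*) [AddCommGroup M] [Module R M]
    (h1 : Module.Finite (Rf R f) (Rf R f ⊗[R] M))
    (h2 : Module.Finite (Rhat R f) (Rhat R f ⊗[R] M)) :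
    Module.Finite R M := by
  classical
  obtain ⟨s1, hs1⟩ := aux_span (Rf R f) h1
  obtain ⟨s2, hs2⟩ := aux_span (Rhat R f) h2
  set N : Submodule R M := Submodule.span R (↑(s1 ∪ s2)) with hN
  have hsub : ∀ m ∈ s1 ∪ s2, m ∈ N := fun m hm => Submodule.subset_span hm
  -- both base changes of M ⧸ N vanish
  have hz1 : ∀ x : Rf R f ⊗[R] (M ⧸ N), x = 0 :=
    aux_zero (Rf R f) N s1 (fun m hm => hsub m (Finset.mem_union_left _ hm)) hs1
  have hz2 : ∀ x : Rhat R f ⊗[R] (M ⧸ N), x = 0 :=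
    aux_zero (Rhat R f) N s2 (fun m hm => hsub m (Finset.mem_union_right _ hm)) hs2
  -- every element of M ⧸ N is killed by a power of f
  have htors : ∀ q : M ⧸ N, ∃ n : ℕ, f ^ n • q = 0 := by
    intro q
    have hbc : IsLocalizedModule (Submonoid.powers f)
        (TensorProduct.mk R (Rf R f) (M ⧸ N) 1) :=
      (isLocalizedModule_iff_isBaseChange (Submonoid.powers f) (Rf R f) _).mpr
        (TensorProduct.isBaseChange R (M ⧸ N) (Rf R f))
    have h0 : TensorProduct.mk R (Rf R f) (M ⧸ N) 1 q = 0 := hz1 _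
    obtain ⟨⟨u, hu⟩, hu0⟩ :=
      (IsLocalizedModule.eq_zero_iff (Submonoid.powers f)
        (TensorProduct.mk R (Rf R f) (M ⧸ N) 1)).mp h0
    obtain ⟨n, rfl⟩ := hu
    exact ⟨n, hu0⟩
  -- every element of M ⧸ N is zero
  have hq0 : ∀ q : M ⧸ N, q = 0 := by
    intro q
    obtain ⟨n, hn⟩ := htors q
    set I : Ideal R := Ideal.span {f} with hI
    set C : Submodule R (M ⧸ N) := Submodule.span R {q} with hC
    have hCkill : ∀ c : C, f ^ n • c = 0 := by
      rintro ⟨c, hc⟩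
      obtain ⟨r, rfl⟩ := Submodule.mem_span_singleton.mp hc
      apply Subtype.ext
      show f ^ n • (r • q) = 0
      rw [smul_comm, hn, smul_zero]
    haveI hflat : Module.Flat R (Rhat R f) :=
      AdicCompletion.flat_of_isNoetherian (Ideal.span {f})
    have hinj : Function.Injective (LinearMap.lTensor (Rhat R f) C.subtype) :=
      Module.Flat.lTensor_preserves_injective_linearMap _ C.injective_subtype
    have h0 : (1 : Rhat R f) ⊗ₜ[R] (⟨q, Submodule.mem_span_singleton_self q⟩ : C) = 0 := by
      apply hinj
      rw [LinearMap.lTensor_tmul, map_zero]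
      exact hz2 _
    -- retraction Rhat ⊗ C → C using evalₐ
    have hker : (I ^ n : Ideal R) ≤ LinearMap.ker (LinearMap.lsmul R C) := by
      intro x hx
      rw [hI, Ideal.span_singleton_pow] at hx
      obtain ⟨b, hb⟩ := Ideal.mem_span_singleton'.mp hx
      rw [LinearMap.mem_ker]
      ext c
      show x • (c : M ⧸ N) = 0
      have := hCkill c
      calc x • (c : M ⧸ N) = (b * f ^ n) • (c : M ⧸ N) := by rw [hb]
        _ = b • (f ^ n • (c : M ⧸ N)) := by rw [mul_smul]
        _ = b • ((f ^ n • c : C) : M ⧸ N) := rfl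
        _ = 0 := by rw [this]; simp
    set ℓ : (R ⧸ I ^ n) →ₗ[R] C →ₗ[R] C :=
      Submodule.liftQ (M₂ := C →ₗ[R] C) (I ^ n) (LinearMap.lsmul R C) hker with hℓ
    set θ : Rhat R f →ₗ[R] C →ₗ[R] C :=
      ℓ ∘ₗ (AdicCompletion.evalₐ I n).toLinearMap with hθ
    have hφ := congrArg (TensorProduct.lift θ) h0
    rw [map_zero, TensorProduct.lift.tmul] at hφ
    have h1' : θ 1 = ℓ 1 := by
      rw [hθ]
      simp only [LinearMap.coe_comp, Function.comp_apply, AlgHom.toLinearMap_apply, map_one]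
    rw [h1'] at hφ
    have hone : (1 : R ⧸ I ^ n) = Submodule.Quotient.mk (1 : R) := rfl
    rw [hone, hℓ, Submodule.liftQ_apply] at hφ
    have : (1 : R) • (⟨q, Submodule.mem_span_singleton_self q⟩ : C) = 0 := hφ
    rw [one_smul] at this
    exact congrArg Subtype.val this
  -- conclude N = ⊤
  have hNtop : N = ⊤ := by
    rw [eq_top_iff]
    intro m _
    have := hq0 (Submodule.Quotient.mk m)
    exact (Submodule.Quotient.mk_eq_zero N).mp this
  exact Module.finite_def.mpr ⟨s1 ∪ s2, by rw [← hN, hNtop]⟩
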